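/- There exists a unique sequence of polynomials (C_n(x|q))_{n≥1} in ℚ(q)[x] such that C_1(x|q) = 1, C_n(-q^{-1}|q) = 0 for all n ≥ 2, and C_{n+1}(x|q) - C_{n+1}(q^{-1}x - q^{-1}|q) = (1 + (q-1)x)·C_n(qx+1|q) for all n ≥ 1; moreover C_n(x|q) has degree n-1 in x for every n ≥ 1. -/

import Mathlib

open Polynomial Finset

/-- The indeterminate `q`, as an element of the field of rational functions `ℚ(q)`. -/
noncomputable def qq : RatFunc ℚ := RatFunc.X

/-- The defining property of the sequence `(C_n(x|q))_{n ≥ 1}`: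
`C_1(x|q) = 1`, `C_n(-q⁻¹|q) = 0` for `n ≥ 2`, and
`C_{n+1}(x|q) - C_{n+1}(q⁻¹x - q⁻¹|q) = (1 + (q-1)x)·C_n(qx+1|q)` for `n ≥ 1`. -/
def IsCRSeq (Cs : ℕ → Polynomial (RatFunc ℚ)) : Prop :=
  Cs 1 = 1 ∧
  (∀ n, 2 ≤ n → (Cs n).eval (-qq⁻¹) = 0) ∧
  (∀ n, 1 ≤ n →
    Cs (n + 1) -
        (Cs (n + 1)).comp (Polynomial.C qq⁻¹ * Polynomial.X - Polynomial.C qq⁻¹) =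
      (1 + Polynomial.C (qq - 1) * Polynomial.X) *
        (Cs n).comp (Polynomial.C qq * Polynomial.X + 1))

namespace CRAux

/-- The affine substitution polynomial `q⁻¹ x - q⁻¹`. -/
noncomputable def sig : Polynomial (RatFunc ℚ) :=
  Polynomial.C qq⁻¹ * Polynomial.X - Polynomial.C qq⁻¹

/-- The fixed point `-1/(q-1)` of the substitution. -/
noncomputable def pfix : RatFunc ℚ := -(qq - 1)⁻¹

lemma hq0 : qq ≠ 0 := RatFunc.X_ne_zero

lemma qq_pow_ne_one {d : ℕ} (hd : d ≠ 0) : qq ^ d ≠ 1 := by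
  intro h
  have h2 : algebraMap (Polynomial ℚ) (RatFunc ℚ) (Polynomial.X ^ d) =
      algebraMap (Polynomial ℚ) (RatFunc ℚ) 1 := by
    rw [map_pow, map_one, RatFunc.algebraMap_X]
    exact h
  have h3 := RatFunc.algebraMap_injective ℚ h2
  have := congrArg Polynomial.natDegree h3
  simp [Polynomial.natDegree_X_pow] at this
  exact hd this

lemma hq1 : qq - 1 ≠ 0 := by
  intro h
  have : qq ^ 1 = 1 := by rw [pow_one]; linear_combination h
  exact qq_pow_ne_one one_ne_zero this

lemma hqi : qq⁻¹ ≠ 0 := inv_ne_zero hq0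

lemma qqinv_pow_ne_one {d : ℕ} (hd : d ≠ 0) : qq⁻¹ ^ d ≠ 1 := by
  intro h
  apply qq_pow_ne_one hd
  rw [inv_pow, inv_eq_one] at h
  exact h

lemma sig_eq : sig = Polynomial.C qq⁻¹ * Polynomial.X + Polynomial.C (-qq⁻¹) := by
  simp [sig, sub_eq_add_neg, map_neg]

lemma sig_degree : sig.degree = 1 := by
  rw [sig_eq]; exact Polynomial.degree_linear hqi

lemma sig_natDegree : sig.natDegree = 1 := by
  have := sig_degree
  exact Polynomial.natDegree_eq_of_degree_eq_some this

lemma sig_leadingCoeff : sig.leadingCoeff = qq⁻¹ := by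
  rw [sig_eq]
  exact Polynomial.leadingCoeff_linear hqi

lemma sig_eval_pfix : sig.eval pfix = pfix := by
  have h0 := hq0
  have h1 := hq1
  simp only [sig, pfix, Polynomial.eval_sub, Polynomial.eval_mul, Polynomial.eval_C,
    Polynomial.eval_X]
  field_simp
  ring

/-- Evaluation at the fixed point of `(1+(q-1)x)·h(qx+1)` is zero. -/
lemma g_eval_pfix (h : Polynomial (RatFunc ℚ)) :
    ((1 + Polynomial.C (qq - 1) * Polynomial.X) *
      h.comp (Polynomial.C qq * Polynomial.X + 1)).eval pfix = 0 := by
  rw [Polynomial.eval_mul]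
  have : (1 + Polynomial.C (qq - 1) * Polynomial.X).eval pfix = 0 := by
    have h1 := hq1
    simp only [Polynomial.eval_add, Polynomial.eval_one, Polynomial.eval_mul,
      Polynomial.eval_C, Polynomial.eval_X, pfix]
    field_simp
    ring
  rw [this, zero_mul]

lemma comp_sig_natDegree (f : Polynomial (RatFunc ℚ)) :
    (f.comp sig).natDegree = f.natDegree := by
  rw [Polynomial.natDegree_comp, sig_natDegree, mul_one]

lemma comp_sig_leadingCoeff (f : Polynomial (RatFunc ℚ)) (hf : f.natDegree ≠ 0) :
    (f.comp sig).leadingCoeff = f.leadingCoeff * qq⁻¹ ^ f.natDegree := by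
  rw [Polynomial.leadingCoeff_comp (by rw [sig_natDegree]; exact one_ne_zero),
    sig_leadingCoeff]

/-- If `f` is fixed by composition with `sig`, it is constant. -/
lemma const_of_comp_fixed (f : Polynomial (RatFunc ℚ)) (hf : f.comp sig = f) :
    f = Polynomial.C (f.coeff 0) := by
  by_cases hd : f.natDegree = 0
  · exact (Polynomial.eq_C_of_natDegree_eq_zero hd)
  · exfalso
    have hf0 : f ≠ 0 := fun h => hd (by simp [h])
    have h1 : f.leadingCoeff * qq⁻¹ ^ f.natDegree = f.leadingCoeff := by
      rw [← comp_sig_leadingCoeff f hd, hf]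
    have h2 : qq⁻¹ ^ f.natDegree = 1 := by
      have hl : f.leadingCoeff ≠ 0 := Polynomial.leadingCoeff_ne_zero.mpr hf0
      have h1' : f.leadingCoeff * qq⁻¹ ^ f.natDegree = f.leadingCoeff * 1 := by
        rw [mul_one]; exact h1
      exact mul_left_cancel₀ hl h1'
    exact qqinv_pow_ne_one hd h2

lemma coeff_T (f : Polynomial (RatFunc ℚ)) (hf : f.natDegree ≠ 0) :
    (f - f.comp sig).coeff f.natDegree = f.leadingCoeff * (1 - qq⁻¹ ^ f.natDegree) := by
  have h1 : (f.comp sig).coeff f.natDegree = (f.comp sig).leadingCoeff := by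
    rw [Polynomial.leadingCoeff, comp_sig_natDegree]
  rw [Polynomial.coeff_sub, h1, comp_sig_leadingCoeff f hf, ← Polynomial.leadingCoeff]
  ring

lemma degree_T (f : Polynomial (RatFunc ℚ)) (hf : f.natDegree ≠ 0) :
    (f - f.comp sig).degree = f.degree := by
  have hf0 : f ≠ 0 := fun h => hf (by simp [h])
  have hl : f.leadingCoeff ≠ 0 := Polynomial.leadingCoeff_ne_zero.mpr hf0
  have hne : (f - f.comp sig).coeff f.natDegree ≠ 0 := by
    rw [coeff_T f hf]
    exact mul_ne_zero hl (sub_ne_zero.mpr (Ne.symm (qqinv_pow_ne_one hf)))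
  have hle : (f - f.comp sig).degree ≤ f.degree := by
    refine le_trans (Polynomial.degree_sub_le _ _) ?_
    rw [max_le_iff]
    constructor
    · exact le_rfl
    · rw [Polynomial.degree_le_iff_coeff_zero]
      intro m hm
      apply Polynomial.coeff_eq_zero_of_natDegree_lt
      rw [comp_sig_natDegree]
      have : f.degree = (f.natDegree : WithBot ℕ) := Polynomial.degree_eq_natDegree hf0
      rw [this] at hm
      exact_mod_cast hm
  have hge : (f.natDegree : WithBot ℕ) ≤ (f - f.comp sig).degree :=
    Polynomial.le_degree_of_ne_zero hne
  rw [Polynomial.degree_eq_natDegree hf0]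
  exact le_antisymm (by rwa [← Polynomial.degree_eq_natDegree hf0]) hge

/-- Surjectivity: every `g` vanishing at the fixed point is of the form `f - f∘sig`. -/
lemma exists_T : ∀ (N : ℕ) (g : Polynomial (RatFunc ℚ)), g.natDegree ≤ N →
    g.eval pfix = 0 → ∃ f, f - f.comp sig = g := by
  intro N
  induction N with
  | zero =>
    intro g hdeg hg
    have : g = Polynomial.C (g.coeff 0) :=
      Polynomial.eq_C_of_natDegree_eq_zero (Nat.le_zero.mp hdeg)
    rw [this] at hg ⊢
    simp at hg
    refine ⟨0, by simp [hg]⟩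
  | succ N ih =>
    intro g hdeg hg
    by_cases hgd : g.natDegree ≤ N
    · exact ih g hgd hg
    · have hd : g.natDegree = N + 1 := le_antisymm hdeg (Nat.not_le.mp hgd)
      have hdne : g.natDegree ≠ 0 := by omega
      have hg0 : g ≠ 0 := fun h => hdne (by simp [h])
      have hl : g.leadingCoeff ≠ 0 := Polynomial.leadingCoeff_ne_zero.mpr hg0
      set d := g.natDegree with hdd
      have hone : (1 : RatFunc ℚ) - qq⁻¹ ^ d ≠ 0 :=
        sub_ne_zero.mpr (Ne.symm (qqinv_pow_ne_one hdne))
      set c : RatFunc ℚ := g.leadingCoeff * (1 - qq⁻¹ ^ d)⁻¹ with hc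
      have hc0 : c ≠ 0 := mul_ne_zero hl (inv_ne_zero hone)
      set m : Polynomial (RatFunc ℚ) := Polynomial.C c * Polynomial.X ^ d with hm
      have hmd : m.natDegree = d := by
        rw [hm, Polynomial.natDegree_C_mul_X_pow d c hc0]
      have hmdeg : m.degree = (d : WithBot ℕ) := by
        rw [hm, Polynomial.degree_C_mul_X_pow d hc0]
      have hml : m.leadingCoeff = c := by
        rw [Polynomial.leadingCoeff, hmd, hm]
        simp
      have hmT : (m - m.comp sig).coeff d = g.leadingCoeff := by
        have := coeff_T m (by rw [hmd]; exact hdne)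
        rw [hmd, hml] at this
        rw [this, hc, mul_assoc, inv_mul_cancel₀ hone, mul_one]
      have hTdeg : (m - m.comp sig).degree = (d : WithBot ℕ) := by
        rw [degree_T m (by rw [hmd]; exact hdne), hmdeg]
      have hTl : (m - m.comp sig).leadingCoeff = g.leadingCoeff := by
        rw [Polynomial.leadingCoeff, Polynomial.natDegree_eq_of_degree_eq_some hTdeg, hmT]
      -- the remainder
      set h : Polynomial (RatFunc ℚ) := g - (m - m.comp sig) with hh
      have hhd : h.degree < (d : WithBot ℕ) := by
        have := Polynomial.degree_sub_lt
          (by rw [Polynomial.degree_eq_natDegree hg0, hTdeg]) hg0 hTl.symm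
        rw [Polynomial.degree_eq_natDegree hg0] at this
        exact this
      have hhnd : h.natDegree ≤ N := by
        by_cases h0 : h = 0
        · simp [h0]
        · have := (Polynomial.degree_eq_natDegree h0) ▸ hhd
          have : h.natDegree < d := by exact_mod_cast this
          omega
      have hTeval : (m - m.comp sig).eval pfix = 0 := by
        rw [Polynomial.eval_sub, Polynomial.eval_comp, sig_eval_pfix, sub_self]
      have hheval : h.eval pfix = 0 := by
        rw [hh, Polynomial.eval_sub, hg, hTeval, sub_zero]
      obtain ⟨f', hf'⟩ := ih h hhnd hheval
      refine ⟨m + f', ?_⟩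
      rw [Polynomial.add_comp]
      have : m + f' - (m.comp sig + f'.comp sig) =
          (m - m.comp sig) + (f' - f'.comp sig) := by ring
      rw [this, hf', hh]
      ring

/-- The step map producing `C_{n+1}` from `C_n`. -/
noncomputable def nextC (h : Polynomial (RatFunc ℚ)) : Polynomial (RatFunc ℚ) :=
  let g := (1 + Polynomial.C (qq - 1) * Polynomial.X) *
    h.comp (Polynomial.C qq * Polynomial.X + 1)
  let f := Classical.choose (exists_T g.natDegree g le_rfl (g_eval_pfix h))
  f - Polynomial.C (f.eval (-qq⁻¹))

lemma nextC_spec (h : Polynomial (RatFunc ℚ)) :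
    (nextC h) - (nextC h).comp sig =
      (1 + Polynomial.C (qq - 1) * Polynomial.X) *
        h.comp (Polynomial.C qq * Polynomial.X + 1) ∧
    (nextC h).eval (-qq⁻¹) = 0 := by
  set g := (1 + Polynomial.C (qq - 1) * Polynomial.X) *
    h.comp (Polynomial.C qq * Polynomial.X + 1) with hg
  have hf := Classical.choose_spec (exists_T g.natDegree g le_rfl (g_eval_pfix h))
  set f := Classical.choose (exists_T g.natDegree g le_rfl (g_eval_pfix h)) with hfd
  constructor
  · show (f - Polynomial.C (f.eval (-qq⁻¹))) -
        (f - Polynomial.C (f.eval (-qq⁻¹))).comp sig = g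
    rw [Polynomial.sub_comp, Polynomial.C_comp]
    rw [← hf]
    ring
  · show (f - Polynomial.C (f.eval (-qq⁻¹))).eval (-qq⁻¹) = 0
    simp

/-- The sequence. -/
noncomputable def Cseq : ℕ → Polynomial (RatFunc ℚ)
  | 0 => 0
  | 1 => 1
  | (n + 2) => nextC (Cseq (n + 1))

lemma Cseq_isCRSeq : IsCRSeq Cseq := by
  refine ⟨rfl, ?_, ?_⟩
  · intro n hn
    obtain ⟨m, rfl⟩ : ∃ m, n = m + 2 := ⟨n - 2, by omega⟩
    exact (nextC_spec (Cseq (m + 1))).2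
  · intro n hn
    obtain ⟨m, rfl⟩ : ∃ m, n = m + 1 := ⟨n - 1, by omega⟩
    exact (nextC_spec (Cseq (m + 1))).1

lemma Cseq_degree : ∀ n : ℕ, (Cseq (n + 1)).degree = (n : WithBot ℕ) := by
  intro n
  induction n with
  | zero => simp [Cseq]
  | succ n ih =>
    have hC0 : Cseq (n + 1) ≠ 0 := fun h => by simp [h] at ih
    have hnd : (Cseq (n + 1)).natDegree = n := Polynomial.natDegree_eq_of_degree_eq_some ih
    have hClc : (Cseq (n + 1)).leadingCoeff ≠ 0 := Polynomial.leadingCoeff_ne_zero.mpr hC0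
    set L : Polynomial (RatFunc ℚ) := Polynomial.C qq * Polynomial.X + 1 with hL
    have hLeq : L = Polynomial.C qq * Polynomial.X + Polynomial.C 1 := by simp [hL]
    have hLnd : L.natDegree = 1 := by rw [hLeq]; exact Polynomial.natDegree_linear hq0
    have hLlc : L.leadingCoeff = qq := by rw [hLeq]; exact Polynomial.leadingCoeff_linear hq0
    set cp := (Cseq (n + 1)).comp L with hcp
    have hcpnd : cp.natDegree = n := by
      rw [hcp, Polynomial.natDegree_comp, hLnd, mul_one, hnd]
    have hcplc : cp.leadingCoeff ≠ 0 := by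
      rw [hcp, Polynomial.leadingCoeff_comp (by rw [hLnd]; exact one_ne_zero), hLlc]
      exact mul_ne_zero hClc (pow_ne_zero _ hq0)
    have hcpne : cp ≠ 0 := fun h => hcplc (by simp [h])
    have hcpdeg : cp.degree = (n : WithBot ℕ) := by
      rw [Polynomial.degree_eq_natDegree hcpne, hcpnd]
    set g := (1 + Polynomial.C (qq - 1) * Polynomial.X) * cp with hg
    have hlin : (1 + Polynomial.C (qq - 1) * Polynomial.X).degree = 1 := by
      rw [add_comm]
      exact Polynomial.degree_linear hq1
    have hgdeg : g.degree = ((n + 1 : ℕ) : WithBot ℕ) := by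
      rw [hg, Polynomial.degree_mul, hlin, hcpdeg]
      rw [add_comm]
      exact_mod_cast rfl
    have hgne : g ≠ 0 := by
      intro h
      rw [h, Polynomial.degree_zero] at hgdeg
      exact (WithBot.bot_ne_coe hgdeg)
    have hT : Cseq (n + 1 + 1) - (Cseq (n + 1 + 1)).comp sig = g :=
      (nextC_spec (Cseq (n + 1))).1
    have hfnd : (Cseq (n + 1 + 1)).natDegree ≠ 0 := by
      intro h0
      have hconst : Cseq (n + 1 + 1) = Polynomial.C ((Cseq (n + 1 + 1)).coeff 0) :=
        Polynomial.eq_C_of_natDegree_eq_zero h0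
      apply hgne
      rw [← hT, hconst, Polynomial.C_comp, sub_self]
    calc (Cseq (n + 1 + 1)).degree
        = (Cseq (n + 1 + 1) - (Cseq (n + 1 + 1)).comp sig).degree :=
          (degree_T _ hfnd).symm
      _ = ((n + 1 : ℕ) : WithBot ℕ) := by rw [hT, hgdeg]

lemma Cseq_unique (Cs Cs' : ℕ → Polynomial (RatFunc ℚ))
    (h : IsCRSeq Cs) (h' : IsCRSeq Cs') : ∀ n, 1 ≤ n → Cs n = Cs' n := by
  obtain ⟨h1, h2, h3⟩ := h
  obtain ⟨h1', h2', h3'⟩ := h'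
  have key : ∀ m : ℕ, Cs (m + 1) = Cs' (m + 1) := by
    intro m
    induction m with
    | zero => rw [h1, h1']
    | succ m ih =>
      set D := Cs (m + 1 + 1) - Cs' (m + 1 + 1) with hD
      have e1 := h3 (m + 1) (by omega)
      have e2 := h3' (m + 1) (by omega)
      rw [ih] at e1
      have hfix : D.comp sig = D := by
        have : D - D.comp sig = 0 := by
          rw [hD, Polynomial.sub_comp]
          have := e1.trans e2.symm
          have expand : Cs (m + 1 + 1) - Cs' (m + 1 + 1) -
              ((Cs (m + 1 + 1)).comp sig - (Cs' (m + 1 + 1)).comp sig) =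
              (Cs (m + 1 + 1) - (Cs (m + 1 + 1)).comp sig) -
              (Cs' (m + 1 + 1) - (Cs' (m + 1 + 1)).comp sig) := by ring
          rw [expand]
          rw [show (Cs (m + 1 + 1) - (Cs (m + 1 + 1)).comp sig) =
            (Cs' (m + 1 + 1) - (Cs' (m + 1 + 1)).comp sig) from this]
          ring
        linear_combination -this
      have hconst := const_of_comp_fixed D hfix
      have hev : D.eval (-qq⁻¹) = 0 := by
        rw [hD, Polynomial.eval_sub, h2 (m + 1 + 1) (by omega), h2' (m + 1 + 1) (by omega),
          sub_zero]
      rw [hconst, Polynomial.eval_C] at hev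
      have : D = 0 := by rw [hconst, hev, map_zero]
      exact sub_eq_zero.mp this
  intro n hn
  obtain ⟨m, rfl⟩ : ∃ m, n = m + 1 := ⟨n - 1, by omega⟩
  exact key m

end CRAux

theorem statement0 :
    (∃ Cs : ℕ → Polynomial (RatFunc ℚ),
      IsCRSeq Cs ∧ ∀ n, 1 ≤ n → (Cs n).degree = ((n - 1 : ℕ) : WithBot ℕ)) ∧
    (∀ Cs Cs' : ℕ → Polynomial (RatFunc ℚ),
      IsCRSeq Cs → IsCRSeq Cs' → ∀ n, 1 ≤ n → Cs n = Cs' n) := by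
  constructor
  · refine ⟨CRAux.Cseq, CRAux.Cseq_isCRSeq, ?_⟩
    intro n hn
    obtain ⟨m, rfl⟩ : ∃ m, n = m + 1 := ⟨n - 1, by omega⟩
    simpa using CRAux.Cseq_degree m
  · exact CRAux.Cseq_unique
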